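/- Let 0 ≤ r₁ ≤ r₂ ≤ ∞ and let ψ be a C¹ function on (r₁,r₂) with finite localized energy (with limits at the endpoints if r₁ = 0 or r₂ = ∞). Then |G(ψ(r₂)) − G(ψ(r₁))| ≤ (1/2) ∫_{r₁}^{r₂} (ψ'(r)² + sin²(ψ(r))/r²) r dr, where G(x) = ∫₀^x |sin ρ| dρ. -/

import Mathlib

open MeasureTheory Filter Set

noncomputable section

/-- `G(x) = ∫₀^x |sin ρ| dρ`. -/
def G (x : ℝ) : ℝ := ∫ ρ in (0 : ℝ)..x, |Real.sin ρ|

lemma G_hasDerivAt (x : ℝ) : HasDerivAt G |Real.sin x| x := by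
  have hc : Continuous fun ρ : ℝ => |Real.sin ρ| := continuous_abs.comp Real.continuous_sin
  exact intervalIntegral.integral_hasDerivAt_right (hc.intervalIntegrable _ _)
    (hc.stronglyMeasurableAtFilter _ _) hc.continuousAt

lemma G_continuous : Continuous G :=
  continuous_iff_continuousAt.2 fun x => (G_hasDerivAt x).continuousAt

lemma G_core (a b : ℝ) (ha : 0 ≤ a) (hab : a ≤ b) (ψ : ℝ → ℝ)
    (hcont : ContinuousOn ψ (Icc a b))
    (hderiv : ∀ r ∈ Ioo a b, HasDerivAt ψ (deriv ψ r) r)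
    (hint : IntegrableOn (fun r => (deriv ψ r ^ 2 + Real.sin (ψ r) ^ 2 / r ^ 2) * r)
      (Ioo a b)) :
    |G (ψ b) - G (ψ a)| ≤
      (1 / 2) * ∫ r in Ioo a b, (deriv ψ r ^ 2 + Real.sin (ψ r) ^ 2 / r ^ 2) * r := by
  set f : ℝ → ℝ := fun r => (deriv ψ r ^ 2 + Real.sin (ψ r) ^ 2 / r ^ 2) * r with hf
  set g' : ℝ → ℝ := fun r => |Real.sin (ψ r)| * deriv ψ r with hg'
  have hbound : ∀ r ∈ Ioo a b, |g' r| ≤ (1 / 2) * f r := by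
    intro r hr
    have hr0 : 0 < r := lt_of_le_of_lt ha hr.1
    set s := Real.sin (ψ r)
    set d := deriv ψ r
    have hrhs : (1 / 2) * f r = (d ^ 2 * r ^ 2 + s ^ 2) / (2 * r) := by
      rw [hf]
      field_simp
      ring
    rw [hrhs, hg', abs_mul, abs_abs, le_div_iff₀ (by linarith)]
    nlinarith [sq_nonneg (|d| * r - |s|), sq_abs s, sq_abs d, abs_nonneg s, abs_nonneg d,
      hr0.le]
  -- measurability of g'
  have hψm : AEStronglyMeasurable ψ (volume.restrict (Ioo a b)) :=
    (hcont.mono Ioo_subset_Icc_self).aestronglyMeasurable measurableSet_Ioo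
  have hg'm : AEStronglyMeasurable g' (volume.restrict (Ioo a b)) :=
    ((continuous_abs.comp Real.continuous_sin).comp_aestronglyMeasurable hψm).mul
      (measurable_deriv ψ).aestronglyMeasurable
  have hfhalf : Integrable (fun r => (1 / 2) * f r) (volume.restrict (Ioo a b)) :=
    hint.const_mul _
  have hae : ∀ᵐ r ∂(volume.restrict (Ioo a b)), ‖g' r‖ ≤ (1 / 2) * f r :=
    (ae_restrict_iff' measurableSet_Ioo).2 (ae_of_all _ fun r hr => by
      simpa [Real.norm_eq_abs] using hbound r hr)
  have hg'int : IntegrableOn g' (Ioo a b) := Integrable.mono' hfhalf hg'm hae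
  have hg'ii : IntervalIntegrable g' volume a b :=
    (intervalIntegrable_iff_integrableOn_Ioo_of_le hab).2 hg'int
  have hFTC : ∫ r in a..b, g' r = G (ψ b) - G (ψ a) := by
    apply intervalIntegral.integral_eq_sub_of_hasDeriv_right_of_le hab
      (G_continuous.comp_continuousOn hcont)
      (fun x hx => ?_) hg'ii
    exact ((G_hasDerivAt (ψ x)).comp x (hderiv x hx)).hasDerivWithinAt
  have h1 : |G (ψ b) - G (ψ a)| = ‖∫ r in Ioo a b, g' r‖ := by
    rw [← hFTC, intervalIntegral.integral_of_le hab, integral_Ioc_eq_integral_Ioo,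
      Real.norm_eq_abs]
  rw [h1]
  calc ‖∫ r in Ioo a b, g' r‖ ≤ ∫ r in Ioo a b, (1 / 2) * f r :=
        norm_integral_le_of_norm_le hfhalf hae
    _ = (1 / 2) * ∫ r in Ioo a b, f r := by rw [integral_const_mul]

/-- For `0 ≤ r₁ ≤ r₂ ≤ ∞` and a `C¹` map `ψ` with finite localized
energy, `|G(ψ(r₂)) − G(ψ(r₁))| ≤ (1/2) ∫_{r₁}^{r₂} (ψ'² + sin²(ψ)/r²) r dr`; the value
`ψ(r₂)` is interpreted as the limit `L` of `ψ` at infinity when `r₂ = ∞`. -/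
theorem G_energy_bound
    (r₁ : ℝ) (r₂ : EReal) (hr₁ : 0 ≤ r₁) (h₁₂ : (r₁ : EReal) ≤ r₂)
    (ψ : ℝ → ℝ) (L : ℝ)
    (hψ : ContDiffOn ℝ 1 ψ {r : ℝ | r₁ ≤ r ∧ (r : EReal) ≤ r₂})
    (hL : (r₂ = ⊤ ∧ Tendsto ψ atTop (nhds L)) ∨ (r₂ ≠ ⊤ ∧ L = ψ r₂.toReal))
    (hint : IntegrableOn (fun r => (deriv ψ r ^ 2 + Real.sin (ψ r) ^ 2 / r ^ 2) * r)
      {r : ℝ | r₁ < r ∧ (r : EReal) < r₂}) :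
    |G L - G (ψ r₁)| ≤ (1 / 2) *
      ∫ r in {r : ℝ | r₁ < r ∧ (r : EReal) < r₂},
        (deriv ψ r ^ 2 + Real.sin (ψ r) ^ 2 / r ^ 2) * r := by
  set f : ℝ → ℝ := fun r => (deriv ψ r ^ 2 + Real.sin (ψ r) ^ 2 / r ^ 2) * r with hf
  rcases hL with ⟨htop, hlim⟩ | ⟨hne, hLeq⟩
  · -- r₂ = ⊤
    subst htop
    have hset : {r : ℝ | r₁ < r ∧ (r : EReal) < (⊤ : EReal)} = Ioi r₁ := by
      ext r; simp [EReal.coe_lt_top]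
    have hdom : {r : ℝ | r₁ ≤ r ∧ (r : EReal) ≤ (⊤ : EReal)} = Ici r₁ := by
      ext r; simp
    rw [hset] at hint ⊢
    rw [hdom] at hψ
    have hpos : 0 ≤ᵐ[volume.restrict (Ioi r₁)] f :=
      (ae_restrict_iff' measurableSet_Ioi).2 (ae_of_all _ fun r hr => by
        have hr0 : 0 < r := lt_of_le_of_lt hr₁ hr
        have h1 : 0 ≤ deriv ψ r ^ 2 + Real.sin (ψ r) ^ 2 / r ^ 2 := by positivity
        exact mul_nonneg h1 hr0.le)
    have key : ∀ b, r₁ ≤ b → |G (ψ b) - G (ψ r₁)| ≤ (1 / 2) * ∫ r in Ioi r₁, f r := by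
      intro b hb
      have hderiv : ∀ r ∈ Ioo r₁ b, HasDerivAt ψ (deriv ψ r) r := by
        intro r hr
        have hmem : Ici r₁ ∈ nhds r := Ici_mem_nhds hr.1
        exact ((hψ.differentiableOn one_ne_zero).differentiableAt hmem).hasDerivAt
      have h2 := G_core r₁ b hr₁ hb ψ
        (hψ.continuousOn.mono Icc_subset_Ici_self) hderiv
        (hint.mono_set Ioo_subset_Ioi_self)
      refine h2.trans ?_
      have h3 : ∫ r in Ioo r₁ b, f r ≤ ∫ r in Ioi r₁, f r :=
        setIntegral_mono_set hint hpos (HasSubset.Subset.eventuallyLE Ioo_subset_Ioi_self)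
      linarith
    have htend : Tendsto (fun b => |G (ψ b) - G (ψ r₁)|) atTop (nhds |G L - G (ψ r₁)|) := by
      have h1 : Tendsto (fun b => G (ψ b)) atTop (nhds (G L)) :=
        (G_continuous.tendsto L).comp hlim
      exact (continuous_abs.tendsto _).comp (h1.sub_const _)
    exact le_of_tendsto htend (eventually_atTop.2 ⟨r₁, key⟩)
  · -- r₂ finite
    have hrbot : r₂ ≠ ⊥ := fun h => by simp [h] at h₁₂
    set b := r₂.toReal with hb
    have hb2 : r₂ = (b : EReal) := (EReal.coe_toReal hne hrbot).symm
    have hab : r₁ ≤ b := by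
      rw [hb2] at h₁₂
      exact_mod_cast h₁₂
    have hset : {r : ℝ | r₁ < r ∧ (r : EReal) < r₂} = Ioo r₁ b := by
      ext r
      simp only [mem_setOf_eq, mem_Ioo, hb2, EReal.coe_lt_coe_iff]
    have hdom : {r : ℝ | r₁ ≤ r ∧ (r : EReal) ≤ r₂} = Icc r₁ b := by
      ext r
      simp only [mem_setOf_eq, mem_Icc, hb2, EReal.coe_le_coe_iff]
    rw [hset] at hint ⊢
    rw [hdom] at hψ
    rw [hLeq]
    have hderiv : ∀ r ∈ Ioo r₁ b, HasDerivAt ψ (deriv ψ r) r := by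
      intro r hr
      have hmem : Icc r₁ b ∈ nhds r := Icc_mem_nhds hr.1 hr.2
      exact ((hψ.differentiableOn one_ne_zero).differentiableAt hmem).hasDerivAt
    exact G_core r₁ b hr₁ hab ψ hψ.continuousOn hderiv hint
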